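/- Let G be a finite simple graph with vertex set {x_1,...,x_n}, let x_m be a vertex of G, let S' be the polynomial ring in the variables {x_1,...,x_n} \ {x_m}, and let u = ∏_{x ∈ N_G(x_m)} x be the product of the neighbors of x_m. Then for every integer k ≥ 1, J(G)^(k) ∩ S' = u^k · J(G \ N_G[x_m])^(k) S', where G \ N_G[x_m] is the graph obtained from G by deleting the closed neighborhood of x_m and J(G \ N_G[x_m])^(k) S' denotes the extension to S' of the k-th symbolic power of its cover ideal. -/

import Mathlib

open MvPolynomial

/-- The `k`-th symbolic power of the cover ideal of a graph `G`:
`J(G)^(k) = ⋂_{{x,y} ∈ E(G)} (x,y)^k`. -/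
noncomputable def coverIdealSymbPow (K : Type*) [Field K] {V : Type*}
    (G : SimpleGraph V) (k : ℕ) : Ideal (MvPolynomial V K) :=
  ⨅ e : {p : V × V // G.Adj p.1 p.2}, (Ideal.span {X e.val.1, X e.val.2}) ^ k

/-- The inclusion `S' = K[x_i : i ≠ j] → S = K[x_1,…,x_n]` of the polynomial
ring obtained by deleting the variable `x_j`. -/
noncomputable def varDeletionHom (K : Type*) [Field K] {n : ℕ} (j : Fin n) :
    MvPolynomial {i : Fin n // i ≠ j} K →ₐ[K] MvPolynomial (Fin n) K :=
  MvPolynomial.rename Subtype.val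

/-- `I ∩ S'`: the restriction of an ideal `I ⊆ S` to the polynomial subring
`S'` obtained by deleting the variable `x_j`, realized as the preimage of `I`
under the inclusion `S' → S`. -/
noncomputable def restrictIdeal (K : Type*) [Field K] {n : ℕ} (j : Fin n)
    (I : Ideal (MvPolynomial (Fin n) K)) : Ideal (MvPolynomial {i : Fin n // i ≠ j} K) :=
  Ideal.comap (varDeletionHom K j) I

/-- The graph `G \ N_G[x_m]` obtained by deleting the closed neighborhood of the
vertex `x_m`, regarded as a graph on the vertex set `{x_1,…,x_n} \ {x_m}` (the
vertices in `N_G(x_m)` become isolated and contribute no edges). -/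
def deleteClosedNbhd {n : ℕ} (G : SimpleGraph (Fin n)) (m : Fin n) :
    SimpleGraph {i : Fin n // i ≠ m} where
  Adj a b := G.Adj a.val b.val ∧ ¬ G.Adj m a.val ∧ ¬ G.Adj m b.val
  symm := by
    constructor
    intro a b hab
    exact ⟨hab.1.symm, hab.2.2, hab.2.1⟩
  loopless := by
    constructor
    intro a ha
    exact (G.ne_of_adj ha.1) rfl

namespace SymbPowAux

variable {K : Type*} [Field K] {σ : Type*}

/-- The ideal of polynomials each of whose monomials has total degree ≥ k in the
variables `a`, `b`. -/
def degIdeal (K : Type*) [Field K] {σ : Type*} (a b : σ) (k : ℕ) :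
    Ideal (MvPolynomial σ K) where
  carrier := {f | ∀ d ∈ f.support, k ≤ d a + d b}
  zero_mem' := by simp
  add_mem' := by
    classical
    intro f g hf hg d hd
    rcases Finset.mem_union.1 (MvPolynomial.support_add hd) with h | h
    · exact hf d h
    · exact hg d h
  smul_mem' := by
    classical
    intro c f hf d hd
    rw [smul_eq_mul] at hd
    obtain ⟨d1, h1, d2, h2, hsum⟩ := Finset.mem_add.1 (MvPolynomial.support_mul c f hd)
    have := hf d2 h2
    subst hsum
    simp only [Finsupp.add_apply]
    omega

lemma mem_degIdeal {a b : σ} {k : ℕ} {f : MvPolynomial σ K} :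
    f ∈ degIdeal K a b k ↔ ∀ d ∈ f.support, k ≤ d a + d b := by
  exact Iff.rfl

lemma degIdeal_mul_le (a b : σ) (i j : ℕ) :
    degIdeal K a b i * degIdeal K a b j ≤ degIdeal K a b (i + j) := by
  classical
  rw [Ideal.mul_le]
  intro f hf g hg
  rw [mem_degIdeal] at hf hg ⊢
  intro d hd
  obtain ⟨d1, h1, d2, h2, hsum⟩ := Finset.mem_add.1 (MvPolynomial.support_mul f g hd)
  have := hf d1 h1
  have := hg d2 h2
  subst hsum
  simp only [Finsupp.add_apply]
  omega

theorem span_pair_pow (a b : σ) (hab : a ≠ b) (k : ℕ) :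
    (Ideal.span {X a, X b} : Ideal (MvPolynomial σ K)) ^ k = degIdeal K a b k := by
  classical
  have hXa : (X a : MvPolynomial σ K) ∈ Ideal.span {X a, X b} :=
    Ideal.subset_span (by simp)
  have hXb : (X b : MvPolynomial σ K) ∈ Ideal.span {X a, X b} :=
    Ideal.subset_span (by simp)
  apply le_antisymm
  · induction k with
    | zero =>
      intro f _
      rw [mem_degIdeal]
      intro d _
      simp
    | succ k ih =>
      rw [pow_succ]
      refine le_trans (Ideal.mul_mono ih ?_) (degIdeal_mul_le a b k 1)
      rw [Ideal.span_le]
      rintro g (rfl | rfl) <;>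
        · rw [SetLike.mem_coe, mem_degIdeal]
          intro d hd
          rw [MvPolynomial.support_X, Finset.mem_singleton] at hd
          subst hd
          simp [Finsupp.single_apply]
  · intro f hf
    rw [mem_degIdeal] at hf
    nth_rewrite 1 [MvPolynomial.as_sum f]
    apply Ideal.sum_mem
    intro d hd
    have hdab : k ≤ d a + d b := hf d hd
    set e : σ →₀ ℕ := Finsupp.single a (d a) + Finsupp.single b (d b) with he
    have hde : d = e + (d - e) := by
      ext i
      have hei : e i = (if a = i then d a else 0) + (if b = i then d b else 0) := by
        simp [he, Finsupp.single_apply]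
      rw [Finsupp.add_apply, Finsupp.tsub_apply, hei]
      by_cases h1 : a = i
      · subst h1
        rw [if_pos rfl, if_neg (fun h => hab h.symm)]
        omega
      · rw [if_neg h1]
        by_cases h2 : b = i
        · subst h2
          rw [if_pos rfl]
          omega
        · rw [if_neg h2]
          omega
    have hmon : (monomial d (coeff d f) : MvPolynomial σ K)
        = (X a ^ (d a) * X b ^ (d b)) * monomial (d - e) (coeff d f) := by
      rw [X_pow_eq_monomial, X_pow_eq_monomial, monomial_mul, monomial_mul, one_mul, one_mul,
        ← he, ← hde]
    rw [hmon]
    refine Ideal.mul_mem_right _ _ ?_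
    have h1 : (X a ^ (d a) * X b ^ (d b) : MvPolynomial σ K)
        ∈ (Ideal.span {X a, X b} : Ideal (MvPolynomial σ K)) ^ (d a + d b) := by
      rw [pow_add]
      exact Ideal.mul_mem_mul (Ideal.pow_mem_pow hXa _) (Ideal.pow_mem_pow hXb _)
    exact Ideal.pow_le_pow_right hdab h1

lemma prod_monomial_one {τ : Type*} (s : Finset τ) (g : τ → (σ →₀ ℕ)) :
    (∏ i ∈ s, (monomial (g i) (1 : K))) = monomial (∑ i ∈ s, g i) 1 := by
  classical
  induction s using Finset.induction with
  | empty => simp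
  | insert _ _ hnot ih =>
    rw [Finset.prod_insert hnot, Finset.sum_insert hnot, ih, monomial_mul, one_mul]

end SymbPowAux

/-- Let `G` be a finite simple graph with vertex set
`{x_1,…,x_n}`, let `x_m` be a vertex, let `S'` be the polynomial ring in the
remaining variables and `u = ∏_{x ∈ N_G(x_m)} x`. Then for every `k ≥ 1`,
`J(G)^(k) ∩ S' = u^k · J(G \ N_G[x_m])^(k) S'`. -/
theorem symbPow_restrict_eq (K : Type*) [Field K] (n : ℕ)
    (G : SimpleGraph (Fin n)) [DecidableRel G.Adj] (m : Fin n) (k : ℕ) (hk : 1 ≤ k) :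
    restrictIdeal K m (coverIdealSymbPow K G k) =
      Ideal.span {(∏ i ∈ Finset.univ.filter (fun i : {i : Fin n // i ≠ m} => G.Adj m i.val),
          (X i : MvPolynomial {i : Fin n // i ≠ m} K)) ^ k} *
        coverIdealSymbPow K (deleteClosedNbhd G m) k := by
  classical
  set A : Finset {i : Fin n // i ≠ m} :=
    Finset.univ.filter (fun i : {i : Fin n // i ≠ m} => G.Adj m i.val) with hA
  set u : MvPolynomial {i : Fin n // i ≠ m} K := ∏ i ∈ A, X i with hu
  have hmemA : ∀ j : {i : Fin n // i ≠ m}, j ∈ A ↔ G.Adj m j.val := by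
    intro j
    rw [hA, Finset.mem_filter]
    simp
  set e0 : {i : Fin n // i ≠ m} →₀ ℕ := ∑ i ∈ A, Finsupp.single i k with he0
  have he0app : ∀ j, e0 j = if j ∈ A then k else 0 := by
    intro j
    rw [he0, Finsupp.finset_sum_apply]
    rw [show (fun i : {i : Fin n // i ≠ m} => Finsupp.single i k j)
        = fun i : {i : Fin n // i ≠ m} => if i = j then k else 0 from
      funext fun i => Finsupp.single_apply]
    exact Finset.sum_ite_eq' A j (fun _ => k)
  have huk : u ^ k = monomial e0 1 := by
    rw [hu, ← Finset.prod_pow]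
    simp only [X_pow_eq_monomial]
    rw [SymbPowAux.prod_monomial_one, ← he0]
  have hmd1 : ∀ (d : {i : Fin n // i ≠ m} →₀ ℕ) (j : {i : Fin n // i ≠ m}),
      Finsupp.mapDomain Subtype.val d j.val = d j :=
    fun d j => Finsupp.mapDomain_apply Subtype.val_injective d j
  have hmd2 : ∀ (d : {i : Fin n // i ≠ m} →₀ ℕ),
      Finsupp.mapDomain Subtype.val d m = 0 := by
    intro d
    apply Finsupp.mapDomain_notin_range
    rintro ⟨j, hj⟩
    exact j.prop hj
  have hL : ∀ f : MvPolynomial {i : Fin n // i ≠ m} K,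
      f ∈ restrictIdeal K m (coverIdealSymbPow K G k) ↔
        ∀ d ∈ f.support, (∀ j ∈ A, k ≤ d j) ∧
          ∀ a b : {i : Fin n // i ≠ m}, (deleteClosedNbhd G m).Adj a b → k ≤ d a + d b := by
    intro f
    rw [restrictIdeal, Ideal.mem_comap, coverIdealSymbPow, Ideal.mem_iInf]
    have hsupp : ((varDeletionHom K m) f).support
        = f.support.image (Finsupp.mapDomain Subtype.val) :=
      MvPolynomial.support_rename_of_injective Subtype.val_injective
    constructor
    · intro h d hd
      have key : ∀ (p q : Fin n), G.Adj p q →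
          k ≤ Finsupp.mapDomain Subtype.val d p + Finsupp.mapDomain Subtype.val d q := by
        intro p q hp
        have h2 : (varDeletionHom K m) f ∈ Ideal.span {X p, X q} ^ k := h ⟨(p, q), hp⟩
        rw [SymbPowAux.span_pair_pow _ _ hp.ne, SymbPowAux.mem_degIdeal] at h2
        refine h2 _ ?_
        rw [hsupp]
        exact Finset.mem_image_of_mem _ hd
      constructor
      · intro j hj
        have hadj : G.Adj m j.val := (hmemA j).1 hj
        have hkey := key m j.val hadj
        have e1 : Finsupp.mapDomain Subtype.val d m = 0 := hmd2 d
        have e2 : Finsupp.mapDomain Subtype.val d j.val = d j := hmd1 d j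
        rw [e1, e2] at hkey
        omega
      · intro a b hab
        have hkey := key a.val b.val hab.1
        have e1 : Finsupp.mapDomain Subtype.val d a.val = d a := hmd1 d a
        have e2 : Finsupp.mapDomain Subtype.val d b.val = d b := hmd1 d b
        rw [e1, e2] at hkey
        exact hkey
    · intro h
      rintro ⟨⟨p1, p2⟩, hp⟩
      show (varDeletionHom K m) f ∈ Ideal.span {X p1, X p2} ^ k
      rw [SymbPowAux.span_pair_pow _ _ hp.ne, SymbPowAux.mem_degIdeal]
      intro D hD
      rw [hsupp] at hD
      obtain ⟨d, hd, rfl⟩ := Finset.mem_image.1 hD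
      show k ≤ Finsupp.mapDomain Subtype.val d p1 + Finsupp.mapDomain Subtype.val d p2
      by_cases h1 : p1 = m
      · have hp' : G.Adj m p2 := h1 ▸ hp
        have hp2 : p2 ≠ m := hp'.ne'
        have hj := (h d hd).1 ⟨p2, hp2⟩ ((hmemA _).2 hp')
        have e1 : Finsupp.mapDomain Subtype.val d p1 = 0 := by rw [h1]; exact hmd2 d
        have e2 : Finsupp.mapDomain Subtype.val d p2 = d ⟨p2, hp2⟩ := hmd1 d ⟨p2, hp2⟩
        rw [e1, e2]
        omega
      · by_cases h2 : p2 = m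
        · have hp' : G.Adj m p1 := (h2 ▸ hp).symm
          have hj := (h d hd).1 ⟨p1, h1⟩ ((hmemA _).2 hp')
          have e1 : Finsupp.mapDomain Subtype.val d p1 = d ⟨p1, h1⟩ := hmd1 d ⟨p1, h1⟩
          have e2 : Finsupp.mapDomain Subtype.val d p2 = 0 := by rw [h2]; exact hmd2 d
          rw [e1, e2]
          omega
        · have e1 : Finsupp.mapDomain Subtype.val d p1 = d ⟨p1, h1⟩ := hmd1 d ⟨p1, h1⟩
          have e2 : Finsupp.mapDomain Subtype.val d p2 = d ⟨p2, h2⟩ := hmd1 d ⟨p2, h2⟩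
          rw [e1, e2]
          by_cases ha1 : G.Adj m p1
          · have := (h d hd).1 ⟨p1, h1⟩ ((hmemA _).2 ha1)
            omega
          · by_cases ha2 : G.Adj m p2
            · have := (h d hd).1 ⟨p2, h2⟩ ((hmemA _).2 ha2)
              omega
            · exact (h d hd).2 ⟨p1, h1⟩ ⟨p2, h2⟩ ⟨hp, ha1, ha2⟩
  have hR : ∀ f : MvPolynomial {i : Fin n // i ≠ m} K,
      f ∈ Ideal.span {u ^ k} * coverIdealSymbPow K (deleteClosedNbhd G m) k ↔
        ∀ d ∈ f.support, (∀ j ∈ A, k ≤ d j) ∧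
          ∀ a b : {i : Fin n // i ≠ m}, (deleteClosedNbhd G m).Adj a b → k ≤ d a + d b := by
    intro f
    constructor
    · intro h
      have h12 := Ideal.mul_le_inf h
      have h1 : f ∈ Ideal.span {u ^ k} := h12.1
      have h2 : f ∈ coverIdealSymbPow K (deleteClosedNbhd G m) k := h12.2
      obtain ⟨g, hg⟩ := Ideal.mem_span_singleton'.1 h1
      intro d hd
      constructor
      · intro j hj
        have hd' := hd
        rw [← hg] at hd'
        obtain ⟨d1, hd1, d2, hd2, hsum⟩ := Finset.mem_add.1 (MvPolynomial.support_mul _ _ hd')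
        rw [huk, MvPolynomial.support_monomial, if_neg one_ne_zero,
          Finset.mem_singleton] at hd2
        subst hd2
        subst hsum
        have he0j : e0 j = k := by rw [he0app, if_pos hj]
        simp only [Finsupp.add_apply]
        omega
      · intro a b hab
        rw [coverIdealSymbPow, Ideal.mem_iInf] at h2
        have h3 : f ∈ Ideal.span {X a, X b} ^ k := h2 ⟨(a, b), hab⟩
        rw [SymbPowAux.span_pair_pow _ _ hab.ne, SymbPowAux.mem_degIdeal] at h3
        exact h3 d hd
    · intro h
      nth_rewrite 1 [MvPolynomial.as_sum f]
      apply Ideal.sum_mem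
      intro d hd
      have hc : coeff d f ≠ 0 := MvPolynomial.mem_support_iff.1 hd
      have hdec : d = e0 + (d - e0) := by
        ext j
        rw [Finsupp.add_apply, Finsupp.tsub_apply, he0app]
        by_cases hj : j ∈ A
        · rw [if_pos hj]
          have := (h d hd).1 j hj
          omega
        · rw [if_neg hj]
          omega
      have hmon : (monomial d (coeff d f) : MvPolynomial {i : Fin n // i ≠ m} K)
          = u ^ k * monomial (d - e0) (coeff d f) := by
        rw [huk, monomial_mul, one_mul, ← hdec]
      rw [hmon]
      refine Ideal.mul_mem_mul (Ideal.mem_span_singleton_self _) ?_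
      rw [coverIdealSymbPow, Ideal.mem_iInf]
      rintro ⟨⟨a, b⟩, hab⟩
      show (monomial (d - e0)) (coeff d f) ∈ Ideal.span {X a, X b} ^ k
      rw [SymbPowAux.span_pair_pow _ _ hab.ne, SymbPowAux.mem_degIdeal]
      intro D hD
      rw [MvPolynomial.support_monomial, if_neg hc, Finset.mem_singleton] at hD
      subst hD
      have he0a : e0 a = 0 := by
        rw [he0app, if_neg (fun hja => hab.2.1 ((hmemA a).1 hja))]
      have he0b : e0 b = 0 := by
        rw [he0app, if_neg (fun hjb => hab.2.2 ((hmemA b).1 hjb))]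
      have hP2 := (h d hd).2 a b hab
      show k ≤ (d - e0) a + (d - e0) b
      rw [Finsupp.tsub_apply, Finsupp.tsub_apply, he0a, he0b]
      omega
  ext f
  rw [hL f, hR f]
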